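/- Let G be a finite simple graph on n ≥ 1 vertices and let λ > 0. Then (1/n)·Σ_{u∈V(G)} p_u·(1+(d_u+1)λ)/λ ≥ 1; equivalently, (1/n)·Σ_{u∈V(G)} p_u/f_λ(d_u) ≥ 1 where f_λ(d) = λ/(1+(d+1)λ) is the occupancy fraction of K_{d+1}. -/

import Mathlib

open scoped Classical

/-- The finset of independent sets of a finite simple graph (the empty set counts). -/
noncomputable def indepSets {V : Type*} [Fintype V] (G : SimpleGraph V) : Finset (Finset V) :=
  Finset.univ.filter fun I => ∀ u ∈ I, ∀ v ∈ I, ¬ G.Adj u v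

/-- The hard-core partition function `Z_G(λ) = Σ_{I independent} λ^|I|`. -/
noncomputable def hcZ {V : Type*} [Fintype V] (G : SimpleGraph V) (l : ℝ) : ℝ :=
  ∑ I ∈ indepSets G, l ^ I.card

/-- The probability that vertex `u` lies in a random independent set drawn from the
hard-core model on `G` at fugacity `λ`. -/
noncomputable def hcMarginal {V : Type*} [Fintype V] (G : SimpleGraph V) (l : ℝ) (u : V) : ℝ :=
  (∑ I ∈ (indepSets G).filter (fun I => u ∈ I), l ^ I.card) / hcZ G l

section Aux

variable {V : Type*} [Fintype V]

/-- Numerator of the marginal. -/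
noncomputable def hcA (G : SimpleGraph V) (l : ℝ) (u : V) : ℝ :=
  ∑ I ∈ (indepSets G).filter (fun I => u ∈ I), l ^ I.card

lemma mem_indepSets {G : SimpleGraph V} {I : Finset V} :
    I ∈ indepSets G ↔ ∀ u ∈ I, ∀ v ∈ I, ¬ G.Adj u v := by
  simp [indepSets]

lemma hcZ_pos (G : SimpleGraph V) {l : ℝ} (hl : 0 < l) : 0 < hcZ G l := by
  refine Finset.sum_pos (fun I _ => pow_pos hl _) ⟨∅, ?_⟩
  simp [indepSets]

lemma hcA_nonneg (G : SimpleGraph V) {l : ℝ} (hl : 0 < l) (u : V) : 0 ≤ hcA G l u :=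
  Finset.sum_nonneg fun I _ => (pow_pos hl _).le

/-- Spatial Markov: the numerator equals `l` times the sum over independent sets avoiding the
closed neighborhood of `u`. -/
lemma hcA_eq (G : SimpleGraph V) (l : ℝ) (u : V) :
    hcA G l u = l * ∑ I ∈ (indepSets G).filter (fun I => u ∉ I ∧ ∀ v ∈ I, ¬ G.Adj u v),
      l ^ I.card := by
  rw [hcA, Finset.mul_sum]
  refine Finset.sum_bij' (fun I _ => I.erase u) (fun J _ => insert u J) ?_ ?_ ?_ ?_ ?_
  · intro I hI
    simp only [Finset.mem_filter] at hI ⊢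
    obtain ⟨hind, huI⟩ := hI
    rw [mem_indepSets] at hind
    refine ⟨mem_indepSets.2 fun a ha b hb => hind a (Finset.mem_of_mem_erase ha)
      b (Finset.mem_of_mem_erase hb), Finset.notMem_erase u I, fun v hv => ?_⟩
    exact hind u huI v (Finset.mem_of_mem_erase hv)
  · intro J hJ
    simp only [Finset.mem_filter] at hJ ⊢
    obtain ⟨hind, huJ, hnadj⟩ := hJ
    rw [mem_indepSets] at hind
    refine ⟨mem_indepSets.2 ?_, Finset.mem_insert_self u J⟩
    rintro a ha b hb hadj
    simp only [Finset.mem_insert] at ha hb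
    obtain rfl | ha := ha
    · obtain rfl | hb := hb
      · exact G.loopless.irrefl _ hadj
      · exact hnadj b hb hadj
    · obtain rfl | hb := hb
      · exact hnadj a ha (G.symm.symm _ _ hadj)
      · exact hind a ha b hb hadj
  · intro I hI
    simp only [Finset.mem_filter] at hI
    exact Finset.insert_erase hI.2
  · intro J hJ
    simp only [Finset.mem_filter] at hJ
    exact Finset.erase_insert hJ.2.1
  · intro I hI
    simp only [Finset.mem_filter] at hI
    rw [← Finset.card_erase_add_one hI.2, pow_succ, mul_comm]

/-- Splitting the sum over independent sets avoiding the open neighborhood of `u`. -/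
lemma split_open (G : SimpleGraph V) (l : ℝ) (u : V) :
    ∑ I ∈ (indepSets G).filter (fun I => ∀ v ∈ I, ¬ G.Adj u v), l ^ I.card
      = (∑ I ∈ (indepSets G).filter (fun I => u ∉ I ∧ ∀ v ∈ I, ¬ G.Adj u v), l ^ I.card)
        + hcA G l u := by
  rw [hcA, ← Finset.sum_filter_add_sum_filter_not
      ((indepSets G).filter (fun I => ∀ v ∈ I, ¬ G.Adj u v)) (fun I => u ∉ I)
      (fun I => l ^ I.card)]
  congr 1
  · congr 1
    ext I
    simp only [Finset.mem_filter]
    tauto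
  · congr 1
    ext I
    simp only [Finset.mem_filter, not_not]
    constructor
    · rintro ⟨⟨hind, -⟩, huI⟩; exact ⟨hind, huI⟩
    · rintro ⟨hind, huI⟩
      exact ⟨⟨hind, fun v hv => mem_indepSets.1 hind u huI v hv⟩, huI⟩

/-- Union bound. -/
lemma union_bound (G : SimpleGraph V) {l : ℝ} (hl : 0 < l) (u : V) :
    hcZ G l ≤ (∑ I ∈ (indepSets G).filter (fun I => ∀ v ∈ I, ¬ G.Adj u v), l ^ I.card)
      + ∑ v ∈ G.neighborFinset u, hcA G l v := by
  have hsplit := Finset.sum_filter_add_sum_filter_not (indepSets G)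
      (fun I => ∀ v ∈ I, ¬ G.Adj u v) (fun I => l ^ I.card)
  rw [hcZ, ← hsplit]
  gcongr _ + ?_
  calc ∑ I ∈ (indepSets G).filter (fun I => ¬ ∀ v ∈ I, ¬ G.Adj u v), l ^ I.card
      ≤ ∑ I ∈ (indepSets G).filter (fun I => ¬ ∀ v ∈ I, ¬ G.Adj u v),
          ∑ v ∈ G.neighborFinset u, (if v ∈ I then l ^ I.card else 0) := by
        refine Finset.sum_le_sum fun I hI => ?_
        simp only [Finset.mem_filter] at hI
        obtain ⟨hind, hbad⟩ := hI
        push_neg at hbad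
        obtain ⟨v0, hv0I, hadj⟩ := hbad
        have hv0 : v0 ∈ G.neighborFinset u := by
          rw [SimpleGraph.mem_neighborFinset]; exact hadj
        have := Finset.single_le_sum
          (f := fun v => if v ∈ I then l ^ I.card else (0:ℝ))
          (fun v _ => by positivity) hv0
        simpa [hv0I] using this
    _ ≤ ∑ I ∈ indepSets G, ∑ v ∈ G.neighborFinset u, (if v ∈ I then l ^ I.card else 0) := by
        refine Finset.sum_le_sum_of_subset_of_nonneg (Finset.filter_subset _ _) ?_
        intro I _ _
        exact Finset.sum_nonneg fun v _ => by positivity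
    _ = ∑ v ∈ G.neighborFinset u, hcA G l v := by
        rw [Finset.sum_comm]
        refine Finset.sum_congr rfl fun v _ => ?_
        rw [hcA, Finset.sum_filter]

/-- Per-vertex local occupancy inequality. -/
lemma per_vertex (G : SimpleGraph V) {l : ℝ} (hl : 0 < l) (u : V) :
    l * hcZ G l ≤ (1 + l) * hcA G l u + l * ∑ v ∈ G.neighborFinset u, hcA G l v := by
  have hQ : (1 + l) * hcA G l u
      = l * ∑ I ∈ (indepSets G).filter (fun I => ∀ v ∈ I, ¬ G.Adj u v), l ^ I.card := by
    rw [split_open, mul_add, ← hcA_eq]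
    ring
  rw [hQ, ← mul_add]
  exact mul_le_mul_of_nonneg_left (union_bound G hl u) hl.le

end Aux

/-- Every graph satisfies the vertex-averaged local-occupancy inequality with
`f_λ(d) = λ/(1+(d+1)λ)`, the occupancy fraction of `K_{d+1}`. -/
theorem stmt12 {V : Type*} [Fintype V] (G : SimpleGraph V) (hn : 1 ≤ Fintype.card V)
    (l : ℝ) (hl : 0 < l) :
    1 ≤ (1 / (Fintype.card V : ℝ)) *
        ∑ u : V, hcMarginal G l u * (1 + ((G.degree u : ℝ) + 1) * l) / l := by
  have hZ : 0 < hcZ G l := hcZ_pos G hl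
  have hn' : (0:ℝ) < (Fintype.card V : ℝ) := by exact_mod_cast hn
  -- the key summed inequality
  have hM : ∀ u : V, hcMarginal G l u = hcA G l u / hcZ G l := fun u => rfl
  have hswap : ∑ u : V, ∑ v ∈ G.neighborFinset u, hcA G l v
      = ∑ u : V, (G.degree u : ℝ) * hcA G l u := by
    have hrw : ∀ u : V, ∑ v ∈ G.neighborFinset u, hcA G l v
        = ∑ v : V, (if G.Adj u v then hcA G l v else 0) := by
      intro u
      rw [SimpleGraph.neighborFinset_eq_filter, Finset.sum_filter]
    simp only [hrw]
    rw [Finset.sum_comm]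
    refine Finset.sum_congr rfl fun v _ => ?_
    rw [← Finset.sum_filter, Finset.sum_const, nsmul_eq_mul]
    have hfe : Finset.univ.filter (fun u => G.Adj u v) = G.neighborFinset v := by
      ext u
      simp only [Finset.mem_filter, Finset.mem_univ, true_and, SimpleGraph.mem_neighborFinset]
      exact G.adj_comm u v
    rw [hfe, SimpleGraph.card_neighborFinset_eq_degree]
  have key : (Fintype.card V : ℝ) * (l * hcZ G l)
      ≤ ∑ u : V, hcA G l u * (1 + ((G.degree u : ℝ) + 1) * l) := by
    have h1 : ∑ u : V, hcA G l u * (1 + ((G.degree u : ℝ) + 1) * l)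
        = ∑ u : V, ((1 + l) * hcA G l u + l * ∑ v ∈ G.neighborFinset u, hcA G l v) := by
      calc ∑ u : V, hcA G l u * (1 + ((G.degree u : ℝ) + 1) * l)
          = ∑ u : V, ((1 + l) * hcA G l u + l * ((G.degree u : ℝ) * hcA G l u)) :=
            Finset.sum_congr rfl fun u _ => by ring
        _ = (∑ u : V, (1 + l) * hcA G l u) + ∑ u : V, l * ((G.degree u : ℝ) * hcA G l u) :=
            Finset.sum_add_distrib
        _ = (∑ u : V, (1 + l) * hcA G l u) + l * ∑ u : V, (G.degree u : ℝ) * hcA G l u := by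
            rw [Finset.mul_sum]
        _ = (∑ u : V, (1 + l) * hcA G l u)
              + l * ∑ u : V, ∑ v ∈ G.neighborFinset u, hcA G l v := by rw [hswap]
        _ = (∑ u : V, (1 + l) * hcA G l u)
              + ∑ u : V, l * ∑ v ∈ G.neighborFinset u, hcA G l v := by rw [Finset.mul_sum]
        _ = _ := Finset.sum_add_distrib.symm
    rw [h1]
    calc (Fintype.card V : ℝ) * (l * hcZ G l)
        = ∑ _u : V, l * hcZ G l := by rw [Finset.sum_const, Finset.card_univ, nsmul_eq_mul]
      _ ≤ _ := Finset.sum_le_sum fun u _ => per_vertex G hl u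
  have hsum : ∑ u : V, hcMarginal G l u * (1 + ((G.degree u : ℝ) + 1) * l) / l
      = (∑ u : V, hcA G l u * (1 + ((G.degree u : ℝ) + 1) * l)) / (hcZ G l * l) := by
    rw [Finset.sum_div]
    refine Finset.sum_congr rfl fun u _ => ?_
    rw [hM u, div_mul_eq_mul_div, div_div]
  rw [hsum]
  have hpos : 0 < (Fintype.card V : ℝ) * (hcZ G l * l) := by positivity
  rw [one_div, inv_mul_eq_div, div_div, le_div_iff₀ (by positivity), one_mul]
  have heq : hcZ G l * l * (Fintype.card V : ℝ)
      = (Fintype.card V : ℝ) * (l * hcZ G l) := by ring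
  linarith [key]
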